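/- For any space X with more than one point, the line graph L(Γ(C(X))) is not chordal; that is, L(Γ(C(X))) contains a chordless cycle of length 4. -/

import Mathlib

open Set

/-- The zero set of a continuous real-valued function. -/
def zeroSet {X : Type*} [TopologicalSpace X] (f : C(X, ℝ)) : Set X := {x | f x = 0}

/-- The zero-set intersection graph `Γ(C(X))`: vertices are the non-units of `C(X)`
(those `f` with nonempty zero set), and distinct vertices `f`, `g` are adjacent
iff `Z(f) ∩ Z(g) ≠ ∅`. -/
def zGraph (X : Type*) [TopologicalSpace X] :
    SimpleGraph {f : C(X, ℝ) // (zeroSet f).Nonempty} where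
  Adj f g := f ≠ g ∧ (zeroSet f.1 ∩ zeroSet g.1).Nonempty
  symm := ⟨by
    rintro f g ⟨hne, hx⟩
    exact ⟨hne.symm, by rwa [Set.inter_comm]⟩⟩
  loopless := ⟨fun f h => h.1 rfl⟩

/-- A cycle (walk) w has a chord: two vertices of w adjacent in G by an edge
which is not an edge of w. -/
def HasChord {V : Type*} (G : SimpleGraph V) {u : V} (w : G.Walk u u) : Prop :=
  ∃ a b, a ∈ w.support ∧ b ∈ w.support ∧ G.Adj a b ∧ s(a, b) ∉ w.edges

/-- A graph is chordal if every cycle of length greater than three has a chord. -/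
def Chordal {V : Type*} (G : SimpleGraph V) : Prop :=
  ∀ (u : V) (w : G.Walk u u), w.IsCycle → 3 < w.length → HasChord G w

/-- helper: Sym2 inequality from coordinate inequality -/
private lemma sym2_ne {α : Type*} {x y z w : α} (h1 : x ≠ z) (h2 : x ≠ w) :
    s(x, y) ≠ s(z, w) := by
  intro h
  have hm : x ∈ s(z, w) := h ▸ Sym2.mem_mk_left x y
  rw [Sym2.mem_iff] at hm
  tauto

/-- For X with more than one point, the line graph of Γ(C(X)) is not chordal: it
contains a chordless cycle of length 4. -/
theorem lineGraph_not_chordal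
    (X : Type*) [TopologicalSpace X] [T2Space X] [CompletelyRegularSpace X] [Nontrivial X] :
    ¬ Chordal (zGraph X).lineGraph ∧
      ∃ (e : (zGraph X).edgeSet) (w : (zGraph X).lineGraph.Walk e e),
        w.IsCycle ∧ w.length = 4 ∧ ¬ HasChord (zGraph X).lineGraph w := by
  obtain ⟨a, b, hab⟩ := exists_pair_ne X
  obtain ⟨f, cf, hfa, hfb⟩ := CompletelyRegularSpace.completely_regular a {b}
    isClosed_singleton (by simpa using hab)
  set F : C(X, ℝ) := ⟨fun x => (f x : ℝ), continuous_subtype_val.comp cf⟩ with hFdef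
  have hFa : F a = 0 := by simp [hFdef, hfa]
  have hFb : F b = 1 := by
    have : f b = 1 := hfb rfl
    simp [hFdef, this]
  have mem0 : a ∈ zeroSet (0 : C(X, ℝ)) := by simp [zeroSet]
  have mem1 : a ∈ zeroSet F := hFa
  have mem2 : a ∈ zeroSet (F + F) := by
    show F a + F a = 0; rw [hFa]; ring
  have mem3 : a ∈ zeroSet (F + F + F) := by
    show F a + F a + F a = 0; rw [hFa]; ring
  let v1 : {g : C(X, ℝ) // (zeroSet g).Nonempty} := ⟨0, ⟨a, mem0⟩⟩
  let v2 : {g : C(X, ℝ) // (zeroSet g).Nonempty} := ⟨F, ⟨a, mem1⟩⟩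
  let v3 : {g : C(X, ℝ) // (zeroSet g).Nonempty} := ⟨F + F, ⟨a, mem2⟩⟩
  let v4 : {g : C(X, ℝ) // (zeroSet g).Nonempty} := ⟨F + F + F, ⟨a, mem3⟩⟩
  have hvb : ∀ i j : {g : C(X, ℝ) // (zeroSet g).Nonempty},
      i.1 b ≠ j.1 b → i ≠ j := fun i j hne he => hne (by rw [he])
  have h12 : v1 ≠ v2 := hvb _ _ (by norm_num [v1, v2, hFb])
  have h13 : v1 ≠ v3 := hvb _ _ (by norm_num [v1, v3, hFb])
  have h14 : v1 ≠ v4 := hvb _ _ (by norm_num [v1, v4, hFb])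
  have h23 : v2 ≠ v3 := hvb _ _ (by norm_num [v2, v3, hFb])
  have h24 : v2 ≠ v4 := hvb _ _ (by norm_num [v2, v4, hFb])
  have h34 : v3 ≠ v4 := hvb _ _ (by norm_num [v3, v4, hFb])
  have adj : ∀ i j : {g : C(X, ℝ) // (zeroSet g).Nonempty},
      i ≠ j → a ∈ zeroSet i.1 → a ∈ zeroSet j.1 → (zGraph X).Adj i j :=
    fun i j hne hi hj => ⟨hne, ⟨a, hi, hj⟩⟩
  have a12 : (zGraph X).Adj v1 v2 := adj _ _ h12 mem0 mem1
  have a23 : (zGraph X).Adj v2 v3 := adj _ _ h23 mem1 mem2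
  have a34 : (zGraph X).Adj v3 v4 := adj _ _ h34 mem2 mem3
  have a41 : (zGraph X).Adj v4 v1 := adj _ _ h14.symm mem3 mem0
  let e1 : (zGraph X).edgeSet := ⟨s(v1, v2), a12⟩
  let e2 : (zGraph X).edgeSet := ⟨s(v2, v3), a23⟩
  let e3 : (zGraph X).edgeSet := ⟨s(v3, v4), a34⟩
  let e4 : (zGraph X).edgeSet := ⟨s(v4, v1), a41⟩
  have subne : ∀ (p q : (zGraph X).edgeSet), p.1 ≠ q.1 → p ≠ q :=
    fun p q h he => h (congrArg Subtype.val he)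
  have ne12 : e1 ≠ e2 := subne _ _ (sym2_ne h12 h13)
  have ne13 : e1 ≠ e3 := subne _ _ (sym2_ne h13 h14)
  have ne14 : e1 ≠ e4 := subne _ _ (by
    rw [show (e1 : Sym2 _) = s(v2, v1) from Sym2.eq_swap]
    exact sym2_ne h24 h12.symm)
  have ne23 : e2 ≠ e3 := subne _ _ (sym2_ne h23 h24)
  have ne24 : e2 ≠ e4 := subne _ _ (sym2_ne h24 h12.symm)
  have ne34 : e3 ≠ e4 := subne _ _ (sym2_ne h34 h13.symm)
  have la12 : (zGraph X).lineGraph.Adj e1 e2 :=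
    ⟨ne12, v2, Sym2.mem_mk_right v1 v2, Sym2.mem_mk_left v2 v3⟩
  have la23 : (zGraph X).lineGraph.Adj e2 e3 :=
    ⟨ne23, v3, Sym2.mem_mk_right v2 v3, Sym2.mem_mk_left v3 v4⟩
  have la34 : (zGraph X).lineGraph.Adj e3 e4 :=
    ⟨ne34, v4, Sym2.mem_mk_right v3 v4, Sym2.mem_mk_left v4 v1⟩
  have la41 : (zGraph X).lineGraph.Adj e4 e1 :=
    ⟨ne14.symm, v1, Sym2.mem_mk_right v4 v1, Sym2.mem_mk_left v1 v2⟩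
  have nla13 : ¬ (zGraph X).lineGraph.Adj e1 e3 := by
    rintro ⟨-, v, hv1, hv3⟩
    have hm1 : v ∈ s(v1, v2) := hv1
    have hm3 : v ∈ s(v3, v4) := hv3
    rw [Sym2.mem_iff] at hm1 hm3
    rcases hm1 with rfl | rfl <;> rcases hm3 with h | h
    · exact h13 h
    · exact h14 h
    · exact h23 h
    · exact h24 h
  have nla24 : ¬ (zGraph X).lineGraph.Adj e2 e4 := by
    rintro ⟨-, v, hv2, hv4⟩
    have hm2 : v ∈ s(v2, v3) := hv2
    have hm4 : v ∈ s(v4, v1) := hv4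
    rw [Sym2.mem_iff] at hm2 hm4
    rcases hm2 with rfl | rfl <;> rcases hm4 with h | h
    · exact h24 h
    · exact h12 h.symm
    · exact h34 h
    · exact h13 h.symm
  let w : (zGraph X).lineGraph.Walk e1 e1 :=
    .cons la12 (.cons la23 (.cons la34 (.cons la41 .nil)))
  have hsupp : w.support = [e1, e2, e3, e4, e1] := rfl
  have hedges : w.edges = [s(e1, e2), s(e2, e3), s(e3, e4), s(e4, e1)] := rfl
  have hlen : w.length = 4 := rfl
  -- distinctness of the four cycle edges (as Sym2 of line-graph vertices)
  have E1 : s(e1, e2) ≠ s(e2, e3) := sym2_ne ne12 ne13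
  have E2 : s(e1, e2) ≠ s(e3, e4) := sym2_ne ne13 ne14
  have E3 : s(e1, e2) ≠ s(e4, e1) := by
    rw [show s(e1, e2) = s(e2, e1) from Sym2.eq_swap]
    exact sym2_ne ne24 ne12.symm
  have E4 : s(e2, e3) ≠ s(e3, e4) := sym2_ne ne23 ne24
  have E5 : s(e2, e3) ≠ s(e4, e1) := sym2_ne ne24 ne12.symm
  have E6 : s(e3, e4) ≠ s(e4, e1) := sym2_ne ne34 ne13.symm
  have hcyc : w.IsCycle := by
    rw [SimpleGraph.Walk.isCycle_def]
    refine ⟨⟨?_⟩, by exact fun h => absurd (congrArg SimpleGraph.Walk.length h) (by rw [hlen]; simp), ?_⟩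
    · rw [hedges]
      refine List.nodup_cons.2 ⟨?_, List.nodup_cons.2 ⟨?_,
        List.nodup_cons.2 ⟨?_, List.nodup_singleton _⟩⟩⟩
      · intro h
        simp only [List.mem_cons, List.not_mem_nil, or_false] at h
        rcases h with h | h | h
        exacts [E1 h, E2 h, E3 h]
      · intro h
        simp only [List.mem_cons, List.not_mem_nil, or_false] at h
        rcases h with h | h
        exacts [E4 h, E5 h]
      · intro h
        simp only [List.mem_cons, List.not_mem_nil, or_false] at h
        exact E6 h
    · rw [hsupp]
      refine List.nodup_cons.2 ⟨?_, List.nodup_cons.2 ⟨?_,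
        List.nodup_cons.2 ⟨?_, List.nodup_singleton _⟩⟩⟩
      · intro h
        simp only [List.mem_cons, List.not_mem_nil, or_false] at h
        rcases h with h | h | h
        exacts [ne23 h, ne24 h, ne12 h.symm]
      · intro h
        simp only [List.mem_cons, List.not_mem_nil, or_false] at h
        rcases h with h | h
        exacts [ne34 h, ne13 h.symm]
      · intro h
        simp only [List.mem_cons, List.not_mem_nil, or_false] at h
        exact ne14 h.symm
  have hnochord : ¬ HasChord (zGraph X).lineGraph w := by
    rintro ⟨x, y, hx, hy, hadj, hne⟩
    rw [hsupp] at hx hy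
    have m1 : s(e1, e2) ∈ w.edges := by rw [hedges]; exact .head _
    have m2 : s(e2, e3) ∈ w.edges := by rw [hedges]; exact .tail _ (.head _)
    have m3 : s(e3, e4) ∈ w.edges := by rw [hedges]; exact .tail _ (.tail _ (.head _))
    have m4 : s(e4, e1) ∈ w.edges := by rw [hedges]; exact .tail _ (.tail _ (.tail _ (.head _)))
    have m1' : s(e2, e1) ∈ w.edges := Sym2.eq_swap ▸ m1
    have m2' : s(e3, e2) ∈ w.edges := Sym2.eq_swap ▸ m2
    have m3' : s(e4, e3) ∈ w.edges := Sym2.eq_swap ▸ m3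
    have m4' : s(e1, e4) ∈ w.edges := Sym2.eq_swap ▸ m4
    simp only [List.mem_cons, List.not_mem_nil, or_false] at hx hy
    rcases hx with rfl | rfl | rfl | rfl | rfl <;>
      rcases hy with rfl | rfl | rfl | rfl | rfl
    all_goals first
      | exact hadj.ne rfl
      | exact nla13 hadj
      | exact nla24 hadj
      | exact nla13 hadj.symm
      | exact nla24 hadj.symm
      | exact hne m1 | exact hne m2 | exact hne m3 | exact hne m4
      | exact hne m1' | exact hne m2' | exact hne m3' | exact hne m4'
  refine ⟨fun hch => hnochord (hch e1 w hcyc (by rw [hlen]; norm_num)),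
    ⟨e1, w, hcyc, hlen, hnochord⟩⟩
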